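/- In the direct product case (P_y = P for all y), a function f : X×Y → ℝ whose Y-sections f(·,y) are all P̂-measurable has a version g that is measurable with respect to the completion 𝔄⊗̂𝔅 of the product σ-algebra and satisfies P̂({x : f(x,y) ≠ g(x,y)}) = 0 for every y ∈ Y, if and only if f is measurable with respect to 𝔄⋇𝔅 = {W △ N : W ∈ 𝔄⊗𝔅, N ∈ M}, where M = {E : P̂(E^y) = 0 for Q-a.e. y}. -/

import Mathlib

open MeasureTheory Set
open scoped symmDiff ENNReal

/-- The σ-ideal `M` of left nil sets (here for the constant family `P_y = P`):
`E ∈ M` iff `E^y` is `P̂`-null for `Q`-a.e. `y`. -/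
def leftNil {X Y : Type*} {mX : MeasurableSpace X} [MeasurableSpace Y]
    (Py : Y → @Measure X mX) (Q : Measure Y) : Set (Set (X × Y)) :=
  {E | ∃ N : Set Y, MeasurableSet N ∧ Q N = 0 ∧ ∀ y ∉ N, Py y {x | (x, y) ∈ E} = 0}

/-- The σ-algebra `𝔄⋇𝔅`. -/
def starSigma {X Y : Type*} {mX : MeasurableSpace X} [MeasurableSpace Y]
    (Py : Y → @Measure X mX) (Q : Measure Y) : MeasurableSpace (X × Y) :=
  MeasurableSpace.generateFrom
    {V | ∃ W N : Set (X × Y), MeasurableSet W ∧ N ∈ leftNil Py Q ∧ V = W ∆ N}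

section Aux

variable {X Y : Type*} {mX : MeasurableSpace X} [MeasurableSpace Y]
  {Py : Y → @Measure X mX} {Q : Measure Y}

lemma leftNil_mono {E E' : Set (X × Y)} (h : E ⊆ E') (hE' : E' ∈ leftNil Py Q) :
    E ∈ leftNil Py Q := by
  obtain ⟨N, hNm, hN0, hsec⟩ := hE'
  exact ⟨N, hNm, hN0, fun y hy =>
    measure_mono_null (fun x hx => h hx) (hsec y hy)⟩

lemma leftNil_iUnion {ι : Type*} [Countable ι] {E : ι → Set (X × Y)}
    (h : ∀ i, E i ∈ leftNil Py Q) : (⋃ i, E i) ∈ leftNil Py Q := by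
  choose N hNm hN0 hsec using h
  refine ⟨⋃ i, N i, MeasurableSet.iUnion hNm, measure_iUnion_null hN0, fun y hy => ?_⟩
  have : {x | (x, y) ∈ ⋃ i, E i} = ⋃ i, {x | (x, y) ∈ E i} := by
    ext x; simp [mem_iUnion]
  rw [this]
  exact measure_iUnion_null fun i => hsec i y (fun hyi => hy (mem_iUnion.2 ⟨i, hyi⟩))

lemma leftNil_empty : (∅ : Set (X × Y)) ∈ leftNil Py Q :=
  ⟨∅, MeasurableSet.empty, measure_empty, fun y _ => by simp⟩

/-- Every `starSigma`-measurable set has the form `W ∆ N`. -/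
lemma starSigma_structure {V : Set (X × Y)} (hV : MeasurableSet[starSigma Py Q] V) :
    ∃ W N : Set (X × Y), MeasurableSet W ∧ N ∈ leftNil Py Q ∧ V = W ∆ N := by
  let m : MeasurableSpace (X × Y) :=
    { MeasurableSet' := fun V =>
        ∃ W N : Set (X × Y), MeasurableSet W ∧ N ∈ leftNil Py Q ∧ V = W ∆ N
      measurableSet_empty := ⟨∅, ∅, MeasurableSet.empty, leftNil_empty, by simp⟩
      measurableSet_compl := by
        rintro V ⟨W, N, hW, hN, rfl⟩
        refine ⟨Wᶜ, N, hW.compl, hN, ?_⟩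
        ext p; simp only [Set.mem_compl_iff, Set.mem_symmDiff]; tauto
      measurableSet_iUnion := by
        intro g hg
        choose W N hW hN hEq using hg
        refine ⟨⋃ i, W i, (⋃ i, W i) ∆ ⋃ i, g i, MeasurableSet.iUnion hW, ?_, ?_⟩
        · refine leftNil_mono (fun p hp => ?_) (leftNil_iUnion hN)
          rw [Set.mem_symmDiff] at hp
          simp only [mem_iUnion] at hp ⊢
          rcases hp with ⟨⟨i, hpi⟩, hnp⟩ | ⟨⟨i, hpi⟩, hnp⟩
          · refine ⟨i, ?_⟩
            have : p ∉ g i := fun h => hnp ⟨i, h⟩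
            rw [hEq i, Set.mem_symmDiff] at this
            by_contra hN'
            exact this (Or.inl ⟨hpi, hN'⟩)
          · refine ⟨i, ?_⟩
            have hpg := hpi
            rw [hEq i, Set.mem_symmDiff] at hpg
            rcases hpg with ⟨hW', _⟩ | ⟨hN', _⟩
            · exact absurd ⟨i, hW'⟩ hnp
            · exact hN'
        · exact (symmDiff_symmDiff_cancel_left _ _).symm }
  have hle : starSigma Py Q ≤ m := by
    apply MeasurableSpace.generateFrom_le
    rintro t ⟨W, N, hW, hN, rfl⟩
    exact ⟨W, N, hW, hN, rfl⟩
  exact hle V hV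

end Aux

section Phi

private noncomputable def phiR (t : ℝ) : ℝ := 1 / 2 + t / (2 * (1 + |t|))

private noncomputable def psiR (s : ℝ) : ℝ := (2 * s - 1) / (1 - |2 * s - 1|)

private lemma phiR_eq (t : ℝ) : phiR t = (1 + |t| + t) / (2 * (1 + |t|)) := by
  have h1 : (0:ℝ) < 1 + |t| := by positivity
  unfold phiR
  field_simp

private lemma phiR_nonneg (t : ℝ) : 0 ≤ phiR t := by
  rw [phiR_eq]
  have h2 : 0 ≤ 1 + |t| + t := by
    have := neg_abs_le t; linarith
  positivity

private lemma measurable_phiR : Measurable phiR := by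
  have : Continuous phiR := by
    unfold phiR
    refine continuous_const.add (Continuous.div continuous_id ?_ fun t => by positivity)
    continuity
  exact this.measurable

private lemma measurable_psiR : Measurable psiR := by
  unfold psiR
  exact ((measurable_const.mul measurable_id).sub measurable_const).div
    (measurable_const.sub ((measurable_const.mul measurable_id).sub measurable_const).abs)

private lemma psiR_phiR (t : ℝ) : psiR (phiR t) = t := by
  have h1 : (0:ℝ) < 1 + |t| := by positivity
  have h2 : 2 * phiR t - 1 = t / (1 + |t|) := by
    unfold phiR; field_simp; ring
  unfold psiR
  rw [h2, abs_div, abs_of_pos h1]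
  have h3 : 1 - |t| / (1 + |t|) = 1 / (1 + |t|) := by field_simp; ring
  rw [h3]
  field_simp

private lemma iSup_rat_eq (a : ℝ≥0∞) (ha : a ≠ ⊤) :
    ⨆ q : ℚ, (if ENNReal.ofReal q < a then ENNReal.ofReal q else 0) = a := by
  apply le_antisymm
  · exact iSup_le fun q => by split_ifs with h; exacts [h.le, zero_le]
  · refine le_of_forall_lt fun c hc => ?_
    have hcT : c < ⊤ := hc.trans_le le_top
    have htr : c.toReal < a.toReal := (ENNReal.toReal_lt_toReal hcT.ne ha).2 hc
    obtain ⟨q, hq1, hq2⟩ := exists_rat_btwn htr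
    have hq0 : (0:ℝ) ≤ (q:ℝ) := le_trans ENNReal.toReal_nonneg hq1.le
    have h1 : ENNReal.ofReal q < a := (ENNReal.ofReal_lt_iff_lt_toReal hq0 ha).2 hq2
    have h2 : c < ENNReal.ofReal q := by
      conv_lhs => rw [← ENNReal.ofReal_toReal hcT.ne]
      exact (ENNReal.ofReal_lt_ofReal_iff_of_nonneg ENNReal.toReal_nonneg).2 hq1
    have h3 := le_iSup (fun q : ℚ => if ENNReal.ofReal q < a then ENNReal.ofReal q else 0) q
    rw [if_pos h1] at h3
    exact h2.trans_le h3

end Phi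

/-- Fubini-type lemma: a `(P × Q)`-null set has `P`-null `y`-sections for `Q`-a.e. `y`. -/
private lemma prod_null_sections {X Y : Type*} [MeasurableSpace X] [MeasurableSpace Y]
    (P : Measure X) (Q : Measure Y) [SFinite P] [SFinite Q]
    {U : Set (X × Y)} (hU : (P.prod Q) U = 0) :
    ∃ N : Set Y, MeasurableSet N ∧ Q N = 0 ∧ ∀ y ∉ N, P {x | (x, y) ∈ U} = 0 := by
  set U' := toMeasurable (P.prod Q) U with hU'def
  have hU'm : MeasurableSet U' := measurableSet_toMeasurable _ _
  have hU'0 : (P.prod Q) U' = 0 := by rw [measure_toMeasurable]; exact hU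
  have hint : ∫⁻ y, P ((fun x => (x, y)) ⁻¹' U') ∂Q = 0 := by
    rw [← Measure.prod_apply_symm hU'm]; exact hU'0
  have hmeas : Measurable fun y => P ((fun x => (x, y)) ⁻¹' U') :=
    measurable_measure_prodMk_right hU'm
  have hae : (fun y => P ((fun x => (x, y)) ⁻¹' U')) =ᵐ[Q] 0 :=
    (lintegral_eq_zero_iff hmeas).1 hint
  set S := {y | P ((fun x => (x, y)) ⁻¹' U') ≠ 0} with hSdef
  have hS0 : Q S = 0 := hae
  refine ⟨toMeasurable Q S, measurableSet_toMeasurable _ _, by rwa [measure_toMeasurable],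
    fun y hy => ?_⟩
  have hyS : y ∉ S := fun h => hy (subset_toMeasurable _ _ h)
  have hU'y : P ((fun x => (x, y)) ⁻¹' U') = 0 := by
    by_contra h; exact hyS h
  have hsub : {x | (x, y) ∈ U} ⊆ (fun x => (x, y)) ⁻¹' U' :=
    fun x hx => subset_toMeasurable _ _ hx
  exact measure_mono_null hsub hU'y

/-- (direct product case `P_y = P`, `R = P×Q`) a function
`f : X×Y → ℝ` all of whose `Y`-sections are `P̂`-measurable admits a version `g`
measurable w.r.t. the `(P×Q)`-completion of `𝔄⊗𝔅` with `P̂({x : f(x,y) ≠ g(x,y)}) = 0`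
for every `y`, if and only if `f` is `𝔄⋇𝔅`-measurable. -/
theorem measurable_version_iff_star_measurable {X Y : Type*}
    [MeasurableSpace X] [MeasurableSpace Y]
    (P : Measure X) (Q : Measure Y) [IsProbabilityMeasure P] [IsProbabilityMeasure Q]
    (f : X × Y → ℝ) (hsec : ∀ y, NullMeasurable (fun x => f (x, y)) P) :
    (∃ g : X × Y → ℝ, NullMeasurable g (P.prod Q) ∧
        ∀ y, P {x | f (x, y) ≠ g (x, y)} = 0) ↔
    @Measurable _ _ (starSigma (fun _ : Y => P) Q) _ f := by
  classical
  constructor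
  · rintro ⟨g, hg, hfg⟩
    -- g is starSigma-measurable
    have hgstar : @Measurable _ _ (starSigma (fun _ : Y => P) Q) _ g := by
      intro B hB
      have hs : NullMeasurableSet (g ⁻¹' B) (P.prod Q) := hg hB
      set s := g ⁻¹' B with hsdef
      set t := toMeasurable (P.prod Q) s with htdef
      have htm : MeasurableSet t := measurableSet_toMeasurable _ _
      have haeq : t =ᵐ[P.prod Q] s := hs.toMeasurable_ae_eq
      have hnull : (P.prod Q) (t ∆ s) = 0 := by
        rw [Set.symmDiff_def]
        have h := MeasureTheory.ae_eq_set.1 haeq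
        exact measure_union_null h.1 h.2
      obtain ⟨N, hNm, hN0, hNs⟩ := prod_null_sections P Q hnull
      have hNil : (t ∆ s) ∈ leftNil (fun _ : Y => P) Q := ⟨N, hNm, hN0, hNs⟩
      apply MeasurableSpace.measurableSet_generateFrom
      exact ⟨t, t ∆ s, htm, hNil, (symmDiff_symmDiff_cancel_left t s).symm⟩
    -- transfer to f
    intro B hB
    have h1 : MeasurableSet[starSigma (fun _ : Y => P) Q] (g ⁻¹' B) := hgstar hB
    have hDNil : ((f ⁻¹' B) ∆ (g ⁻¹' B)) ∈ leftNil (fun _ : Y => P) Q := by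
      refine leftNil_mono (E' := {p | f p ≠ g p}) (fun p hp => ?_)
        ⟨∅, MeasurableSet.empty, measure_empty, fun y _ => hfg y⟩
      rw [Set.mem_symmDiff] at hp
      intro hfp
      simp only [Set.mem_preimage, hfp] at hp
      tauto
    have h2 : MeasurableSet[starSigma (fun _ : Y => P) Q] ((f ⁻¹' B) ∆ (g ⁻¹' B)) := by
      apply MeasurableSpace.measurableSet_generateFrom
      refine ⟨∅, (f ⁻¹' B) ∆ (g ⁻¹' B), MeasurableSet.empty, hDNil, ?_⟩
      ext p; simp [Set.mem_symmDiff]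
    have key : f ⁻¹' B = (g ⁻¹' B) ∆ ((g ⁻¹' B) ∆ (f ⁻¹' B)) :=
      (symmDiff_symmDiff_cancel_left _ _).symm
    rw [key, symmDiff_comm (g ⁻¹' B) (f ⁻¹' B)]
    exact MeasurableSet.symmDiff h1 h2
  · intro hf
    -- Backward direction: construct the version g.
    set F : X × Y → ℝ≥0∞ := fun p => ENNReal.ofReal (phiR (f p)) with hFdef
    have hF : @Measurable _ _ (starSigma (fun _ : Y => P) Q) _ F :=
      ENNReal.measurable_ofReal.comp (measurable_phiR.comp hf)
    have hA : ∀ q : ℚ, MeasurableSet[starSigma (fun _ : Y => P) Q]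
        (F ⁻¹' Set.Ioi (ENNReal.ofReal q)) := fun q => hF measurableSet_Ioi
    have hstruct := fun q : ℚ => starSigma_structure (hA q)
    choose W N hW hN hEq using hstruct
    choose NY hNYm hNY0 hNYs using hN
    set NYall : Set Y := ⋃ q : ℚ, NY q with hNYalldef
    have hNYallm : MeasurableSet NYall := MeasurableSet.iUnion hNYm
    have hNYall0 : Q NYall = 0 := measure_iUnion_null hNY0
    set G : X × Y → ℝ≥0∞ :=
      fun p => ⨆ q : ℚ, (W q).indicator (fun _ => ENNReal.ofReal q) p with hGdef
    have hGm : Measurable G :=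
      Measurable.iSup fun q => (measurable_const.indicator (hW q))
    set h : X × Y → ℝ := fun p => psiR (G p).toReal with hhdef
    have hhm : Measurable h := measurable_psiR.comp hGm.ennreal_toReal
    refine ⟨fun p => if p.2 ∈ NYall then f p else h p, ?_, ?_⟩
    · -- null measurability
      have hsub : {p : X × Y | (if p.2 ∈ NYall then f p else h p) ≠ h p} ⊆
          (univ : Set X) ×ˢ NYall := by
        intro p hp
        simp only [mem_setOf_eq] at hp
        by_cases hmem : p.2 ∈ NYall
        · exact ⟨trivial, hmem⟩
        · simp [hmem] at hp
      have hnull : (P.prod Q) {p : X × Y | (if p.2 ∈ NYall then f p else h p) ≠ h p} = 0 := by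
        refine measure_mono_null hsub ?_
        rw [Measure.prod_prod, hNYall0, mul_zero]
      have haeq : h =ᵐ[P.prod Q] fun p => if p.2 ∈ NYall then f p else h p := by
        rw [Filter.eventuallyEq_comm, Filter.EventuallyEq, ae_iff]
        exact hnull
      exact hhm.nullMeasurable.congr haeq
    · -- sections
      intro y
      by_cases hy : y ∈ NYall
      · have : {x | f (x, y) ≠ if (x, y).2 ∈ NYall then f (x, y) else h (x, y)} = ∅ := by
          ext x; simp [hy]
        rw [this, measure_empty]
      · -- good case
        have hBad : P (⋃ q : ℚ, {x | (x, y) ∈ N q}) = 0 :=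
          measure_iUnion_null fun q => hNYs q y (fun hyq => hy (mem_iUnion.2 ⟨q, hyq⟩))
        refine measure_mono_null (fun x hx => ?_) hBad
        simp only [mem_setOf_eq] at hx
        by_contra hxnb
        apply hx
        have hxN : ∀ q : ℚ, (x, y) ∉ N q := by
          intro q hq
          exact hxnb (mem_iUnion.2 ⟨q, hq⟩)
        -- membership equivalences
        have hmem : ∀ q : ℚ, ((x, y) ∈ W q ↔ ENNReal.ofReal q < F (x, y)) := by
          intro q
          have h1 : ((x, y) ∈ F ⁻¹' Set.Ioi (ENNReal.ofReal q)) ↔ (x, y) ∈ W q := by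
            rw [hEq q, Set.mem_symmDiff]
            have := hxN q
            tauto
          rw [← h1]
          simp [Set.mem_preimage, Set.mem_Ioi]
        have hGF : G (x, y) = F (x, y) := by
          have : G (x, y) = ⨆ q : ℚ,
              (if ENNReal.ofReal q < F (x, y) then ENNReal.ofReal q else 0) := by
            refine iSup_congr fun q => ?_
            rw [Set.indicator_apply]
            exact if_congr (hmem q) rfl rfl
          rw [this, iSup_rat_eq _ ENNReal.ofReal_ne_top]
        have : h (x, y) = f (x, y) := by
          rw [hhdef]
          simp only
          rw [hGF, hFdef]
          simp only
          rw [ENNReal.toReal_ofReal (phiR_nonneg _), psiR_phiR]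
        simp only [hy, if_false, this]
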